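/- Let Q = A ∈ ℝ^{m×np} with column blocks Q = [Q₁,…,Q_p], Q_j ∈ ℝ^{m×n}. Fix s ≥ 1 and η ≥ 0, and let z ∈ ℝ^{np} satisfy ‖Az‖₂ ≤ 1 and ‖z‖_{b1} ≤ sη. Then for every index i ∈ {1,…,p} and every matrix P_i ∈ ℝ^{m×n}, the i-th block of z satisfies ‖z_i‖₂ ≤ sη · max_{1≤j≤p} ‖δ_{ij} I_n − P_iᵀ Q_j‖₂ + ‖P_i‖₂, where ‖·‖₂ on matrices is the spectral norm. Consequently, f_s(η) := sup{‖z‖_{b∞} : ‖Az‖₂ ≤ 1, ‖z‖_{b1} ≤ sη} ≤ max_i inf_{P_i} ( sη · max_j ‖δ_{ij} I_n − P_iᵀ Q_j‖₂ + ‖P_i‖₂ ). -/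

import Mathlib

open MeasureTheory ProbabilityTheory Finset Matrix

/-- Euclidean norm of a finitely-indexed real vector. -/
noncomputable def vnorm {ι : Type*} [Fintype ι] (v : ι → ℝ) : ℝ :=
  Real.sqrt (∑ i, (v i) ^ 2)

/-- Euclidean norm of the `i`-th block of `x ∈ ℝ^{np}` (blocks indexed by `Fin p`). -/
noncomputable def bnorm {n p : ℕ} (x : Fin p × Fin n → ℝ) (i : Fin p) : ℝ :=
  vnorm (fun j => x (i, j))

/-- Block-ℓ1 norm: `‖x‖_{b1} = ∑ i, ‖x_i‖₂`. -/
noncomputable def bl1 {n p : ℕ} (x : Fin p × Fin n → ℝ) : ℝ :=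
  ∑ i, bnorm x i

/-- Block-ℓ∞ norm: `‖x‖_{b∞} = max_i ‖x_i‖₂`. -/
noncomputable def blinf {n p : ℕ} (x : Fin p × Fin n → ℝ) : ℝ :=
  ⨆ i, bnorm x i

open scoped Classical in
/-- Block support: indices of nonzero blocks. -/
noncomputable def bsupp {n p : ℕ} (x : Fin p × Fin n → ℝ) : Finset (Fin p) :=
  Finset.univ.filter (fun i => ∃ j, x (i, j) ≠ 0)

/-- `ω₂(A,s) = inf { ‖Az‖₂ / ‖z‖_{b∞} : z ≠ 0, ‖z‖_{b1} ≤ s ‖z‖_{b∞} }`. -/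
noncomputable def omega2 {m n p : ℕ} (A : Matrix (Fin m) (Fin p × Fin n) ℝ) (s : ℝ) : ℝ :=
  sInf {r | ∃ z : Fin p × Fin n → ℝ, z ≠ 0 ∧ bl1 z ≤ s * blinf z ∧
    r = vnorm (A.mulVec z) / blinf z}

/-- `ω_{b∞}(AᵀA,s) = inf { ‖AᵀAz‖_{b∞} / ‖z‖_{b∞} : z ≠ 0, ‖z‖_{b1} ≤ s ‖z‖_{b∞} }`. -/
noncomputable def omegaBInf {m n p : ℕ} (A : Matrix (Fin m) (Fin p × Fin n) ℝ) (s : ℝ) : ℝ :=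
  sInf {r | ∃ z : Fin p × Fin n → ℝ, z ≠ 0 ∧ bl1 z ≤ s * blinf z ∧
    r = blinf ((Aᵀ * A).mulVec z) / blinf z}

/-- Block ℓ1-constrained minimal singular value
`ρ_s(A) = inf { ‖Az‖₂ / ‖z‖₂ : z ≠ 0, ‖z‖_{b1}² ≤ s ‖z‖₂² }`. -/
noncomputable def rhoCMSV {m n p : ℕ} (A : Matrix (Fin m) (Fin p × Fin n) ℝ) (s : ℝ) : ℝ :=
  sInf {r | ∃ z : Fin p × Fin n → ℝ, z ≠ 0 ∧ (bl1 z) ^ 2 ≤ s * (vnorm z) ^ 2 ∧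
    r = vnorm (A.mulVec z) / vnorm z}

/-- Spectral norm (largest singular value) of a real matrix, as the ℓ2→ℓ2 operator norm. -/
noncomputable def specNorm {ι κ : Type*} [Fintype ι] [Fintype κ] (M : Matrix ι κ ℝ) : ℝ :=
  sSup {r | ∃ v : κ → ℝ, vnorm v ≤ 1 ∧ r = vnorm (M.mulVec v)}

/-- The `j`-th column block (of `n` columns) of a matrix with `np` columns. -/
def colBlock {ι : Type*} {n p : ℕ} (Q : Matrix ι (Fin p × Fin n) ℝ) (j : Fin p) :
    Matrix ι (Fin n) ℝ := Matrix.of fun r c => Q r (j, c)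

/-- The `l`-th row block (of `n` rows) of a matrix with `np` rows. -/
def rowBlock {κ : Type*} {n p : ℕ} (P : Matrix (Fin p × Fin n) κ ℝ) (l : Fin p) :
    Matrix (Fin n) κ ℝ := Matrix.of fun r c => P (l, r) c

/-- `δ_{ij} Iₙ`. -/
def deltaId (n : ℕ) {p : ℕ} (i j : Fin p) : Matrix (Fin n) (Fin n) ℝ :=
  if i = j then 1 else 0

/-- Orlicz ψ₂ norm of a scalar random variable. -/
noncomputable def psi2 {Ω : Type*} [MeasurableSpace Ω] (μ : Measure Ω) (Y : Ω → ℝ) : ℝ :=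
  sInf {t | 0 < t ∧ ∫ ω, Real.exp ((Y ω) ^ 2 / t ^ 2) ∂μ ≤ 2}


section auxLemmas
open scoped Matrix.Norms.L2Operator

/-- A plain vector viewed in Euclidean space. -/
noncomputable def evec {ι : Type*} [Fintype ι] (v : ι → ℝ) : EuclideanSpace ℝ ι :=
  (WithLp.equiv 2 (ι → ℝ)).symm v

lemma vnorm_eq {ι : Type*} [Fintype ι] (v : ι → ℝ) : vnorm v = ‖evec v‖ := by
  rw [EuclideanSpace.norm_eq]
  simp [vnorm, evec, Real.norm_eq_abs, sq_abs]

lemma specNorm_eq {ι κ : Type*} [Fintype ι] [Fintype κ] [DecidableEq κ]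
    (M : Matrix ι κ ℝ) : specNorm M = ‖M‖ := by
  rw [Matrix.l2_opNorm_def,
    ← ContinuousLinearMap.sSup_unitClosedBall_eq_norm]
  unfold specNorm
  congr 1
  ext r
  constructor
  · rintro ⟨v, hv, rfl⟩
    refine ⟨evec v, ?_, ?_⟩
    · simpa [Metric.mem_closedBall, dist_zero_right] using (vnorm_eq v ▸ hv)
    · rw [vnorm_eq]
      rfl
  · rintro ⟨x, hx, rfl⟩
    refine ⟨x, ?_, ?_⟩
    · rw [vnorm_eq]
      simpa [Metric.mem_closedBall, dist_zero_right, evec] using hx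
    · rw [vnorm_eq]
      rfl

lemma vnorm_nonneg {ι : Type*} [Fintype ι] (v : ι → ℝ) : 0 ≤ vnorm v :=
  Real.sqrt_nonneg _

lemma specNorm_nonneg {ι κ : Type*} [Fintype ι] [Fintype κ] [DecidableEq κ]
    (M : Matrix ι κ ℝ) : 0 ≤ specNorm M := by
  rw [specNorm_eq]; exact norm_nonneg _

lemma specNorm_transpose {ι κ : Type*} [Fintype ι] [Fintype κ] [DecidableEq ι] [DecidableEq κ]
    (M : Matrix ι κ ℝ) : specNorm Mᵀ = specNorm M := by
  rw [specNorm_eq, specNorm_eq]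
  have h : Mᵀ = Mᴴ := by
    ext i j; simp [Matrix.conjTranspose_apply]
  rw [h]
  exact Matrix.l2_opNorm_conjTranspose M

lemma vnorm_mulVec_le {ι κ : Type*} [Fintype ι] [Fintype κ] [DecidableEq κ]
    (M : Matrix ι κ ℝ) (v : κ → ℝ) :
    vnorm (M.mulVec v) ≤ specNorm M * vnorm v := by
  rw [specNorm_eq, vnorm_eq, vnorm_eq]
  exact Matrix.l2_opNorm_mulVec M (evec v)

lemma vnorm_add_le {ι : Type*} [Fintype ι] (v w : ι → ℝ) :
    vnorm (v + w) ≤ vnorm v + vnorm w := by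
  rw [vnorm_eq, vnorm_eq, vnorm_eq]
  exact norm_add_le (evec v) (evec w)

lemma vnorm_sum_le {ι κ : Type*} [Fintype ι] [Fintype κ] (w : κ → ι → ℝ) :
    vnorm (∑ j, w j) ≤ ∑ j, vnorm (w j) := by
  simp only [vnorm_eq]
  have h : evec (∑ j, w j) = ∑ j, evec (w j) := by simp [evec]
  rw [h]
  exact norm_sum_le _ _

lemma block_decomp {m n p : ℕ} (A : Matrix (Fin m) (Fin p × Fin n) ℝ)
    (z : Fin p × Fin n → ℝ) (i : Fin p) (P : Matrix (Fin m) (Fin n) ℝ) :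
    (fun k => z (i, k)) =
      (∑ j, (deltaId n i j - Pᵀ * colBlock A j).mulVec (fun k => z (j, k))) +
        Pᵀ.mulVec (A.mulVec z) := by
  have h2 : ∑ j, (Pᵀ * colBlock A j).mulVec (fun k => z (j, k)) =
      Pᵀ.mulVec (A.mulVec z) := by
    simp only [← Matrix.mulVec_mulVec]
    have hmap : (∑ x : Fin p, Pᵀ *ᵥ colBlock A x *ᵥ fun k => z (x, k)) =
        Pᵀ *ᵥ (∑ x : Fin p, colBlock A x *ᵥ fun k => z (x, k)) := by
      simp only [← Matrix.mulVecLin_apply, ← map_sum]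
    rw [hmap]
    funext r
    simp [Matrix.mulVec, dotProduct, colBlock, Fintype.sum_prod_type]
  have h1 : ∑ j, (deltaId n i j).mulVec (fun k => z (j, k)) = fun k => z (i, k) := by
    rw [Finset.sum_eq_single i]
    · simp [deltaId, Matrix.one_mulVec]
    · intro j _ hj
      simp [deltaId, (Ne.symm hj : i ≠ j), Matrix.zero_mulVec]
    · simp
  simp only [Matrix.sub_mulVec, Finset.sum_sub_distrib, h1, h2]
  funext k
  simp

end auxLemmas

/-- Proposition 4, case `Q = A`, `⋄ = 2`: if `‖Az‖₂ ≤ 1` and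
`‖z‖_{b1} ≤ sη`, then for every `i` and every `P_i ∈ ℝ^{m×n}`,
`‖z_i‖₂ ≤ sη max_j ‖δ_{ij} Iₙ - P_iᵀ A_j‖₂ + ‖P_i‖₂`; consequently
`f_s(η) ≤ max_i inf_{P_i} (sη max_j ‖δ_{ij} Iₙ - P_iᵀ A_j‖₂ + ‖P_i‖₂)`. -/
theorem stmt16 {m n p : ℕ} (A : Matrix (Fin m) (Fin p × Fin n) ℝ) (s η : ℝ)
    (hs : 1 ≤ s) (hη : 0 ≤ η)
    (z : Fin p × Fin n → ℝ)
    (hz1 : vnorm (A.mulVec z) ≤ 1) (hz2 : bl1 z ≤ s * η) :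
    (∀ (i : Fin p) (P : Matrix (Fin m) (Fin n) ℝ),
      bnorm z i ≤
        s * η * (⨆ j : Fin p, specNorm (deltaId n i j - Pᵀ * colBlock A j)) + specNorm P) ∧
    sSup {r | ∃ z' : Fin p × Fin n → ℝ,
        vnorm (A.mulVec z') ≤ 1 ∧ bl1 z' ≤ s * η ∧ r = blinf z'} ≤
      ⨆ i : Fin p, sInf {r | ∃ P : Matrix (Fin m) (Fin n) ℝ,
        r = s * η * (⨆ j : Fin p, specNorm (deltaId n i j - Pᵀ * colBlock A j)) +
          specNorm P} := by
    classical
  have key : ∀ (w : Fin p × Fin n → ℝ), vnorm (A.mulVec w) ≤ 1 → bl1 w ≤ s * η →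
      ∀ (i : Fin p) (P : Matrix (Fin m) (Fin n) ℝ),
      bnorm w i ≤
        s * η * (⨆ j : Fin p, specNorm (deltaId n i j - Pᵀ * colBlock A j)) + specNorm P := by
    intro w hw1 hw2 i P
    set S := ⨆ j : Fin p, specNorm (deltaId n i j - Pᵀ * colBlock A j) with hSdef
    have hS0 : 0 ≤ S := Real.iSup_nonneg fun j => specNorm_nonneg _
    have hSle : ∀ j, specNorm (deltaId n i j - Pᵀ * colBlock A j) ≤ S := fun j =>
      le_ciSup (f := fun j => specNorm (deltaId n i j - Pᵀ * colBlock A j))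
        (Set.Finite.bddAbove (Set.finite_range _)) j
    have hb : bnorm w i =
        vnorm ((∑ j, (deltaId n i j - Pᵀ * colBlock A j).mulVec (fun k => w (j, k))) +
          Pᵀ.mulVec (A.mulVec w)) := by
      rw [bnorm, vnorm]
      congr 1
      have := block_decomp A w i P
      rw [← this]
    calc bnorm w i
        ≤ vnorm (∑ j, (deltaId n i j - Pᵀ * colBlock A j).mulVec (fun k => w (j, k))) +
          vnorm (Pᵀ.mulVec (A.mulVec w)) := hb ▸ vnorm_add_le _ _
      _ ≤ (∑ j, vnorm ((deltaId n i j - Pᵀ * colBlock A j).mulVec (fun k => w (j, k)))) +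
          specNorm P * 1 := by
          refine add_le_add (vnorm_sum_le _) ?_
          calc vnorm (Pᵀ.mulVec (A.mulVec w))
              ≤ specNorm Pᵀ * vnorm (A.mulVec w) := vnorm_mulVec_le _ _
            _ ≤ specNorm P * 1 := by
                rw [specNorm_transpose]
                exact mul_le_mul_of_nonneg_left hw1 (specNorm_nonneg P)
      _ ≤ (∑ j, S * bnorm w j) + specNorm P * 1 := by
          refine add_le_add_left (Finset.sum_le_sum fun j _ => ?_) _
          calc vnorm ((deltaId n i j - Pᵀ * colBlock A j).mulVec (fun k => w (j, k)))
              ≤ specNorm (deltaId n i j - Pᵀ * colBlock A j) * vnorm (fun k => w (j, k)) :=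
                vnorm_mulVec_le _ _
            _ ≤ S * bnorm w j := mul_le_mul_of_nonneg_right (hSle j) (vnorm_nonneg _)
      _ = S * bl1 w + specNorm P * 1 := by rw [bl1, Finset.mul_sum]
      _ ≤ S * (s * η) + specNorm P * 1 :=
          add_le_add_left (mul_le_mul_of_nonneg_left hw2 hS0) _
      _ = s * η * S + specNorm P := by ring
  refine ⟨key z hz1 hz2, ?_⟩
  have hsη : 0 ≤ s * η := mul_nonneg (le_trans zero_le_one hs) hη
  have hB0 : 0 ≤ ⨆ i : Fin p, sInf {r | ∃ P : Matrix (Fin m) (Fin n) ℝ,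
      r = s * η * (⨆ j : Fin p, specNorm (deltaId n i j - Pᵀ * colBlock A j)) +
        specNorm P} := by
    refine Real.iSup_nonneg fun i => Real.sInf_nonneg ?_
    rintro r ⟨P, rfl⟩
    exact add_nonneg (mul_nonneg hsη (Real.iSup_nonneg fun j => specNorm_nonneg _))
      (specNorm_nonneg _)
  refine Real.sSup_le ?_ hB0
  rintro r ⟨z', h1', h2', rfl⟩
  rw [blinf]
  refine Real.iSup_le (fun i => ?_) hB0
  have h3 : bnorm z' i ≤ sInf {r | ∃ P : Matrix (Fin m) (Fin n) ℝ,
      r = s * η * (⨆ j : Fin p, specNorm (deltaId n i j - Pᵀ * colBlock A j)) +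
        specNorm P} := by
    refine le_csInf ⟨_, ⟨0, rfl⟩⟩ ?_
    rintro r ⟨P, rfl⟩
    exact key z' h1' h2' i P
  exact h3.trans (le_ciSup (f := fun i => sInf {r | ∃ P : Matrix (Fin m) (Fin n) ℝ,
    r = s * η * (⨆ j : Fin p, specNorm (deltaId n i j - Pᵀ * colBlock A j)) +
      specNorm P}) (Set.Finite.bddAbove (Set.finite_range _)) i)
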